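/- Let T be a spanning tree of Kₙ (n ≥ 3). Then T is a star (a tree of diameter at most 2, i.e., all edges share a common vertex) if and only if every spanning tree T' of Kₙ satisfies |E(T) △ E(T')| ≤ 2(n-2), i.e., T shares at least one edge with every spanning tree. -/

import Mathlib

open SimpleGraph

/-- A graph is a star if all of its edges share a common vertex. -/
def IsStar {V : Type*} (T : SimpleGraph V) : Prop :=
  ∃ c : V, ∀ e ∈ T.edgeSet, c ∈ e

private lemma aux_no_triangle {V : Type*} {G : SimpleGraph V} (h : G.IsAcyclic)
    {a b c : V} (hab : G.Adj a b) (hbc : G.Adj b c) (hca : G.Adj c a) : False := by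
  refine h (.cons hab (.cons hbc (.cons hca .nil))) ?_
  simp [Walk.isCycle_def, Walk.isTrail_def, hab.ne, hbc.ne, hca.ne, hab.ne', hbc.ne', hca.ne',
    hca.ne.symm, Sym2.eq_iff]

private lemma aux_no_c4 {V : Type*} {G : SimpleGraph V} (h : G.IsAcyclic)
    {a b c d : V} (hab : G.Adj a b) (hbc : G.Adj b c) (hcd : G.Adj c d) (hda : G.Adj d a)
    (hac : a ≠ c) (hbd : b ≠ d) : False := by
  refine h (.cons hab (.cons hbc (.cons hcd (.cons hda .nil)))) ?_
  simp [Walk.isCycle_def, Walk.isTrail_def, hab.ne, hbc.ne, hcd.ne, hda.ne, hab.ne', hbc.ne',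
    hcd.ne', hda.ne', hac, hbd, hac.symm, hbd.symm, hda.ne.symm, Sym2.eq_iff]

private lemma aux_edge_avoid {V : Type*} {T : SimpleGraph V} {v : V} {e : Sym2 V}
    (he : e ∈ T.edgeSet) (hv : v ∉ e) : ∃ x y, T.Adj x y ∧ x ≠ v ∧ y ≠ v := by
  induction e using Sym2.ind with
  | _ x y =>
    refine ⟨x, y, he, ?_, ?_⟩ <;> rintro rfl <;> exact hv (by simp)

private lemma aux_tree_ncard {n : ℕ} {G : SimpleGraph (Fin n)} (h : G.IsTree) :
    G.edgeSet.ncard = n - 1 := by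
  classical
  have h1 := h.card_edgeFinset
  rw [Fintype.card_fin] at h1
  have h2 : G.edgeSet.ncard = G.edgeFinset.card := by
    rw [Set.ncard_eq_toFinset_card']
    congr 1
  omega

/-- Every connected graph on a finite vertex type has a spanning tree. -/
private lemma aux_exists_tree_le {V : Type*} [Fintype V] :
    ∀ (k : ℕ) (G : SimpleGraph V), G.edgeSet.ncard ≤ k → G.Connected →
      ∃ H, H ≤ G ∧ H.IsTree := by
  intro k
  induction k with
  | zero =>
    intro G hcard hG
    have he : G.edgeSet = ∅ := by
      rw [← Set.ncard_eq_zero (G.edgeSet.toFinite)]; omega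
    have hbot : G = ⊥ := edgeSet_eq_empty.mp he
    exact ⟨G, le_rfl, hG, by rw [hbot]; exact isAcyclic_bot⟩
  | succ k ih =>
    intro G hcard hG
    by_cases ha : G.IsAcyclic
    · exact ⟨G, le_rfl, hG, ha⟩
    · rw [isAcyclic_iff_forall_edge_isBridge] at ha
      push_neg at ha
      obtain ⟨e, he, hbr⟩ := ha
      induction e using Sym2.ind with
      | _ u v =>
      rw [mem_edgeSet] at he
      rw [isBridge_iff] at hbr
      push_neg at hbr
      have hreach : (G \ fromEdgeSet {s(u, v)}).Reachable u v := hbr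
      set G' := G \ fromEdgeSet {s(u, v)} with hG'def
      have hle : G' ≤ G := sdiff_le
      have hadj' : ∀ {x y : V}, G.Adj x y → s(x, y) ≠ s(u, v) → G'.Adj x y := by
        intro x y hxy hne
        simp only [hG'def, sdiff_adj, fromEdgeSet_adj, Set.mem_singleton_iff]
        exact ⟨hxy, fun hc => hne hc.1⟩
      have key : ∀ x y : V, G.Reachable x y → G'.Reachable x y := by
        intro x y hxy
        obtain ⟨p⟩ := hxy
        induction p with
        | nil => exact Reachable.refl _
        | @cons a b c hadj p ih2 =>
          refine Reachable.trans ?_ ih2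
          by_cases hc : s(a, b) = s(u, v)
          · rw [Sym2.eq_iff] at hc
            rcases hc with ⟨rfl, rfl⟩ | ⟨rfl, rfl⟩
            · exact hreach
            · exact hreach.symm
          · exact (hadj' hadj hc).reachable
      have hG'conn : G'.Connected := by
        haveI := hG.nonempty
        exact Connected.mk fun x y => key x y (hG.preconnected x y)
      have hedge : G'.edgeSet = G.edgeSet \ {s(u, v)} := by
        rw [hG'def, edgeSet_sdiff, edgeSet_fromEdgeSet]
        ext f
        simp only [Set.mem_diff, Set.mem_singleton_iff, Set.mem_setOf_eq]
        constructor
        · rintro ⟨h1, h2⟩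
          refine ⟨h1, fun hf => h2 ⟨hf, ?_⟩⟩
          subst hf
          simp [he.ne]
        · rintro ⟨h1, h2⟩
          exact ⟨h1, fun hf => h2 hf.1⟩
      have hmem : s(u, v) ∈ G.edgeSet := G.mem_edgeSet.mpr he
      have hcard' : G'.edgeSet.ncard ≤ k := by
        rw [hedge, Set.ncard_diff_singleton_of_mem hmem]
        have : 1 ≤ G.edgeSet.ncard := by
          rw [Nat.one_le_iff_ne_zero, Ne, Set.ncard_eq_zero (G.edgeSet.toFinite)]
          intro h0
          rw [h0] at hmem
          exact hmem
        omega
      obtain ⟨H, hH, ht⟩ := ih G' hcard' hG'conn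
      exact ⟨H, hH.trans hle, ht⟩

private lemma aux_compl_connected {n : ℕ} (hn : 3 ≤ n) {T : SimpleGraph (Fin n)}
    (hT : T.IsTree) (hS : ¬ IsStar T) : Tᶜ.Connected := by
  classical
  have hac := hT.IsAcyclic
  have tri : ∀ {a b c : Fin n}, T.Adj a b → T.Adj b c → ¬T.Adj a c := by
    intro a b c h1 h2 h3
    exact aux_no_triangle hac h1 h2 h3.symm
  haveI : Nonempty (Fin n) := ⟨⟨0, by omega⟩⟩
  refine Connected.mk ?_
  intro u v
  rcases eq_or_ne u v with rfl | huv
  · exact Reachable.refl _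
  by_cases hadj : T.Adj u v
  swap
  · exact (Adj.reachable (by rw [compl_adj]; exact ⟨huv, hadj⟩))
  by_cases hw : ∃ w, w ≠ u ∧ w ≠ v ∧ ¬T.Adj u w ∧ ¬T.Adj v w
  · obtain ⟨w, h1, h2, h3, h4⟩ := hw
    exact (Adj.reachable (by rw [compl_adj]; exact ⟨h1.symm, h3⟩)).trans
      (Adj.reachable (by rw [compl_adj]; exact ⟨h2, fun h => h4 h.symm⟩))
  push_neg at hw
  -- hw : ∀ w, w ≠ u → w ≠ v → ¬T.Adj u w → T.Adj v w
  rw [IsStar] at hS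
  push_neg at hS
  -- a leaf-like neighbor of u other than v
  have hA : ∃ a, T.Adj u a ∧ a ≠ v := by
    obtain ⟨e, he, hve⟩ := hS v
    obtain ⟨x, y, hxy, hxv, hyv⟩ := aux_edge_avoid he hve
    rcases eq_or_ne x u with rfl | hxu
    · exact ⟨y, hxy, hyv⟩
    rcases eq_or_ne y u with rfl | hyu
    · exact ⟨x, hxy.symm, hxv⟩
    by_cases hux : T.Adj u x
    · exact ⟨x, hux, hxv⟩
    have hvx : T.Adj v x := hw x hxu hxv hux
    have hvy : ¬T.Adj v y := tri hvx hxy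
    have huy : T.Adj u y := by
      by_contra h
      exact hvy (hw y hyu hyv h)
    exact ⟨y, huy, hyv⟩
  have hB : ∃ b, T.Adj v b ∧ b ≠ u := by
    obtain ⟨e, he, hue⟩ := hS u
    obtain ⟨x, y, hxy, hxu, hyu⟩ := aux_edge_avoid he hue
    rcases eq_or_ne x v with rfl | hxv
    · exact ⟨y, hxy, hyu⟩
    rcases eq_or_ne y v with rfl | hyv
    · exact ⟨x, hxy.symm, hxu⟩
    by_cases hvx : T.Adj v x
    · exact ⟨x, hvx, hxu⟩
    have hux : T.Adj u x := by
      by_contra h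
      exact hvx (hw x hxu hxv h)
    have huy : ¬T.Adj u y := tri hux hxy
    have hvy : T.Adj v y := hw y hyu hyv huy
    exact ⟨y, hvy, hyu⟩
  obtain ⟨a, hua, hav⟩ := hA
  obtain ⟨b, hvb, hbu⟩ := hB
  have hab : a ≠ b := by
    rintro rfl
    exact tri hadj hvb hua
  have hub : ¬T.Adj u b := tri hadj hvb
  have hva : ¬T.Adj v a := tri hadj.symm hua
  have hba : ¬T.Adj b a := by
    intro h
    exact aux_no_c4 hac hua h.symm hvb.symm hadj.symm hbu.symm hav
  have r1 : Tᶜ.Adj u b := by rw [compl_adj]; exact ⟨hbu.symm, hub⟩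
  have r2 : Tᶜ.Adj b a := by rw [compl_adj]; exact ⟨hab.symm, hba⟩
  have r3 : Tᶜ.Adj a v := by rw [compl_adj]; exact ⟨hav, fun h => hva h.symm⟩
  exact r1.reachable.trans (r2.reachable.trans r3.reachable)

private lemma aux_exists_neighbor {V : Type*} {G : SimpleGraph V} (hG : G.Connected)
    {x y : V} (hxy : x ≠ y) : ∃ z, G.Adj x z := by
  obtain ⟨p⟩ := hG.preconnected x y
  cases p with
  | nil => exact absurd rfl hxy
  | cons h _ => exact ⟨_, h⟩

theorem stmt_7 (n : ℕ) (hn : 3 ≤ n) (T : SimpleGraph (Fin n)) (hT : T.IsTree) :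
    IsStar T ↔ ∀ T' : SimpleGraph (Fin n), T'.IsTree →
      (symmDiff T.edgeSet T'.edgeSet).ncard ≤ 2 * (n - 2) := by
  classical
  constructor
  · rintro ⟨c, hc⟩ T' hT'
    -- T contains all edges at c
    have hall : ∀ x : Fin n, x ≠ c → T.Adj c x := by
      intro x hx
      obtain ⟨z, hz⟩ := aux_exists_neighbor hT.isConnected hx
      have hmem : s(x, z) ∈ T.edgeSet := T.mem_edgeSet.mpr hz
      have := hc _ hmem
      rw [Sym2.mem_iff] at this
      rcases this with rfl | rfl
      · exact absurd rfl hx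
      · exact hz.symm
    -- find an edge of T' at c
    have hx : ∃ x : Fin n, x ≠ c := by
      obtain ⟨x, hx⟩ := Fintype.exists_ne_of_one_lt_card (by simp; omega) c
      exact ⟨x, hx⟩
    obtain ⟨x, hx⟩ := hx
    obtain ⟨z, hz⟩ := aux_exists_neighbor hT'.isConnected (Ne.symm hx)
    have hzc : z ≠ c := hz.ne'
    have hmem : s(c, z) ∈ T.edgeSet ∩ T'.edgeSet :=
      ⟨T.mem_edgeSet.mpr (hall z hzc), T'.mem_edgeSet.mpr hz⟩
    set A := T.edgeSet
    set B := T'.edgeSet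
    have hAcard : A.ncard = n - 1 := aux_tree_ncard hT
    have hBcard : B.ncard = n - 1 := aux_tree_ncard hT'
    have hsub : symmDiff A B ⊆ (A ∪ B) \ {s(c, z)} := by
      intro e he
      rw [Set.mem_symmDiff] at he
      constructor
      · rcases he with ⟨h1, _⟩ | ⟨h1, _⟩
        · exact Or.inl h1
        · exact Or.inr h1
      · rintro rfl
        rcases he with ⟨_, h2⟩ | ⟨_, h2⟩
        · exact h2 hmem.2
        · exact h2 hmem.1
    have h1 : (symmDiff A B).ncard ≤ ((A ∪ B) \ {s(c, z)}).ncard :=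
      Set.ncard_le_ncard hsub (Set.toFinite _)
    have h2 : ((A ∪ B) \ {s(c, z)}).ncard = (A ∪ B).ncard - 1 :=
      Set.ncard_diff_singleton_of_mem (Or.inl hmem.1)
    have h3 : (A ∪ B).ncard + (A ∩ B).ncard = A.ncard + B.ncard :=
      Set.ncard_union_add_ncard_inter A B (A.toFinite) (B.toFinite)
    have h4 : 1 ≤ (A ∩ B).ncard := by
      rw [Nat.one_le_iff_ne_zero, Ne, Set.ncard_eq_zero (Set.toFinite _)]
      intro h0
      rw [h0] at hmem
      exact hmem
    omega
  · intro h
    by_contra hS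
    obtain ⟨H, hH, hHtree⟩ := aux_exists_tree_le (Tᶜ.edgeSet.ncard) Tᶜ le_rfl
      (aux_compl_connected hn hT hS)
    have hdisj : Disjoint T.edgeSet H.edgeSet := by
      rw [Set.disjoint_left]
      intro e he1 he2
      have : e ∈ Tᶜ.edgeSet := edgeSet_mono hH he2
      induction e using Sym2.ind with
      | _ x y =>
        rw [mem_edgeSet, compl_adj] at this
        exact this.2 (T.mem_edgeSet.mp he1)
    have hsd : symmDiff T.edgeSet H.edgeSet = T.edgeSet ∪ H.edgeSet := by
      rw [hdisj.symmDiff_eq_sup]; rfl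
    have hcard : (symmDiff T.edgeSet H.edgeSet).ncard = (n - 1) + (n - 1) := by
      rw [hsd, Set.ncard_union_eq hdisj (T.edgeSet.toFinite) (H.edgeSet.toFinite),
        aux_tree_ncard hT, aux_tree_ncard hHtree]
    have := h H hHtree
    rw [hcard] at this
    omega
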